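/- For permutations σ and τ of {1,…,k}, let I_1 and I_2 be the sets of positions at which the sentinel $ occurs in mdolBWT(M,σ) and in mdolBWT(M,τ), respectively. If I_1 ≠ I_2, then there exist indices i ≠ j such that T_i is a proper suffix of T_j. -/

import Mathlib

/-- The `j`-th rotation of a string. -/
def rot {β : Type*} (l : List β) (j : ℕ) : List β := l.drop j ++ l.take j

/-- Nonstrict lexicographic order on strings. -/
def listLe {β : Type*} [LT β] (X Y : List β) : Prop := X = Y ∨ List.Lex (· < ·) X Y

/-- The string `W_σ = T_{σ(1)}$_1 T_{σ(2)}$_2 ⋯ T_{σ(k)}$_k` over the alphabet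
`Fin k ⊕ₗ α` (separators `toLex (Sum.inl p)` are pairwise distinct, increasing, and
smaller than every symbol of `Σ`). -/
def mWord {α : Type*} {k : ℕ} (T : Fin k → List α) (σ : Equiv.Perm (Fin k)) :
    List (Fin k ⊕ₗ α) :=
  (List.finRange k).flatMap fun p =>
    ((T (σ p)).map fun a => toLex (Sum.inr a)) ++ [toLex (Sum.inl p)]

/-- The multiset (list) of all rotations of `W_σ`. -/
def mRots {α : Type*} {k : ℕ} (T : Fin k → List α) (σ : Equiv.Perm (Fin k)) :
    List (List (Fin k ⊕ₗ α)) :=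
  (List.range (mWord T σ).length).map (rot (mWord T σ))

/-- The last character of a rotation, with every separator replaced by the single
sentinel `$` (here `⊥`). -/
def lastOut {α : Type*} {k : ℕ} (R : List (Fin k ⊕ₗ α)) : WithBot α :=
  match R.getLast? with
  | none => ⊥
  | some b => match ofLex b with
    | Sum.inl _ => ⊥
    | Sum.inr a => (a : WithBot α)

/-- The multidollar BWT read off from a lexicographically sorted list `L` of the
rotations of `W_σ`. -/
def mdolOf {α : Type*} {k : ℕ} (L : List (List (Fin k ⊕ₗ α))) : List (WithBot α) :=
  L.map lastOut

namespace MdolAux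

def keyFn {β γ : Type*} : List (β ⊕ₗ γ) → List γ
  | [] => []
  | c :: l => Sum.elim (fun _ => []) (fun a => a :: keyFn l) (ofLex c)

@[simp] theorem keyFn_nil {β γ : Type*} : keyFn ([] : List (β ⊕ₗ γ)) = [] := rfl
@[simp] theorem keyFn_inl {β γ : Type*} (b : β) (l : List (β ⊕ₗ γ)) :
    keyFn (toLex (Sum.inl b) :: l) = [] := rfl
@[simp] theorem keyFn_inr {β γ : Type*} (a : γ) (l : List (β ⊕ₗ γ)) :
    keyFn (toLex (Sum.inr a) :: l) = a :: keyFn l := rfl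

theorem listLe_nil {β : Type*} [LT β] (l : List β) : listLe [] l := by
  cases l with
  | nil => exact Or.inl rfl
  | cons a l => exact Or.inr List.Lex.nil

theorem listLe_cons {β : Type*} [LT β] {l l' : List β} (x : β) (h : listLe l l') :
    listLe (x :: l) (x :: l') := by
  rcases h with h | h
  · exact Or.inl (by rw [h])
  · exact Or.inr (List.Lex.cons h)

theorem keyFn_mono {β γ : Type*} [LT β] [LT γ] {X Y : List (β ⊕ₗ γ)}
    (h : List.Lex (· < ·) X Y) : listLe (keyFn X) (keyFn Y) := by
  induction h with
  | nil => exact listLe_nil _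
  | @cons a l1 l2 h ih =>
      obtain ⟨x, rfl⟩ : ∃ x, toLex x = a := ⟨ofLex a, rfl⟩
      rcases x with b | g
      · simp only [keyFn_inl]; exact listLe_nil _
      · simp only [keyFn_inr]; exact listLe_cons _ ih
  | @rel a l1 b l2 hab =>
      obtain ⟨x, rfl⟩ : ∃ x, toLex x = a := ⟨ofLex a, rfl⟩
      obtain ⟨y, rfl⟩ : ∃ y, toLex y = b := ⟨ofLex b, rfl⟩
      rw [Sum.Lex.toLex_lt_toLex] at hab
      cases hab with
      | inl h => simp only [keyFn_inl]; exact listLe_nil _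
      | inr h => exact Or.inr (List.Lex.rel h)
      | sep => simp only [keyFn_inl]; exact listLe_nil _

theorem keyFn_append_left {β γ : Type*} {l₁ : List (β ⊕ₗ γ)} (l₂ : List (β ⊕ₗ γ))
    {b : β} (hb : toLex (Sum.inl b) ∈ l₁) : keyFn (l₁ ++ l₂) = keyFn l₁ := by
  induction l₁ with
  | nil => simp at hb
  | cons c l ih =>
      obtain ⟨x, rfl⟩ : ∃ x, toLex x = c := ⟨ofLex c, rfl⟩
      rcases x with b' | g
      · simp only [List.cons_append, keyFn_inl]
      · simp only [List.cons_append, keyFn_inr]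
        rcases List.mem_cons.mp hb with h' | h'
        · exact absurd (toLex.injective h'.symm) (by simp)
        · rw [ih h']

theorem keyFn_block {β γ : Type*} (t : List γ) (p : β) (rest : List (β ⊕ₗ γ)) :
    keyFn ((t.map fun a => toLex (Sum.inr a)) ++ toLex (Sum.inl p) :: rest) = t := by
  induction t with
  | nil => simp
  | cons a t ih => simpa using ih

end MdolAux
namespace MdolAux

def wordOf {ι β γ : Type*} (t : ι → List γ) (s : ι → β) (ps : List ι) : List (β ⊕ₗ γ) :=
  ps.flatMap fun p => ((t p).map fun a => toLex (Sum.inr a)) ++ [toLex (Sum.inl (s p))]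

theorem wordOf_cons {ι β γ : Type*} (t : ι → List γ) (s : ι → β) (p : ι) (ps : List ι) :
    wordOf t s (p :: ps) =
      ((t p).map fun a => toLex (Sum.inr a)) ++ toLex (Sum.inl (s p)) :: wordOf t s ps := by
  simp [wordOf]

theorem length_wordOf_cons {ι β γ : Type*} (t : ι → List γ) (s : ι → β) (p : ι) (ps : List ι) :
    (wordOf t s (p :: ps)).length = (t p).length + 1 + (wordOf t s ps).length := by
  rw [wordOf_cons]; simp; omega

theorem getLast?_wordOf {ι β γ : Type*} (t : ι → List γ) (s : ι → β) (ps : List ι)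
    (hps : ps ≠ []) : ∃ b, (wordOf t s ps).getLast? = some (toLex (Sum.inl b)) := by
  induction ps with
  | nil => exact absurd rfl hps
  | cons p ps ih =>
      rw [wordOf_cons]
      rcases eq_or_ne ps [] with rfl | h
      · refine ⟨s p, ?_⟩
        simp [wordOf, List.getLast?_append]
      · obtain ⟨b, hb⟩ := ih h
        refine ⟨b, ?_⟩
        rw [List.getLast?_append, List.getLast?_cons, hb]
        rfl

end MdolAux
namespace MdolAux

theorem keys_wordOf {ι β γ : Type*} (t : ι → List γ) (s : ι → β) (ps : List ι) :
    (List.range (wordOf t s ps).length).map (fun j => keyFn ((wordOf t s ps).drop j))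
      = ps.flatMap (fun p => (List.range (t p).length).map ((t p).drop) ++ [[]]) := by
  induction ps with
  | nil => simp [wordOf]
  | cons p ps ih =>
      rw [length_wordOf_cons, List.range_add, List.map_append, List.map_map]
      rw [List.flatMap_cons, ← ih]
      congr 1
      · -- first block
        rw [List.range_succ, List.map_append]
        congr 1
        · apply List.map_congr_left
          intro j hj
          rw [List.mem_range] at hj
          rw [wordOf_cons, List.drop_append_of_le_length (by simpa using hj.le),
            ← List.map_drop, keyFn_block]
        · simp only [List.map_cons, List.map_nil]
          rw [wordOf_cons, List.drop_append_of_le_length (by simp)]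
          rw [show List.drop (t p).length ((t p).map fun a => toLex (Sum.inr a)) = [] by simp]
          rfl
      · apply List.map_congr_left
        intro j hj
        simp only [Function.comp_apply]
        congr 1
        rw [wordOf_cons]
        have : ((t p).map fun a => toLex (Sum.inr a)) ++ toLex (Sum.inl (s p)) :: wordOf t s ps
            = (((t p).map fun a => toLex (Sum.inr a)) ++ [toLex (Sum.inl (s p))]) ++ wordOf t s ps := by
          simp
        rw [this]
        have hlen : (t p).length + 1 + j
            = (((t p).map fun a => toLex (Sum.inr a)) ++ [toLex (Sum.inl (s p))]).length + j := by
          simp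
        rw [hlen, List.drop_length_add_append]

end MdolAux
namespace MdolAux

theorem claimB {ι β γ : Type*} (t : ι → List γ) (s : ι → β) (ps : List ι)
    (htp : ∀ p ∈ ps, t p ≠ []) :
    ∀ j < (wordOf t s ps).length,
      ∃ p ∈ ps, ∃ m ≤ (t p).length, keyFn ((wordOf t s ps).drop j) = (t p).drop m ∧
        (m = 0 ↔ (j = 0 ∨ ∃ b, (wordOf t s ps)[j-1]? = some (toLex (Sum.inl b)))) := by
  induction ps with
  | nil => intro j hj; simp [wordOf] at hj
  | cons p ps ih =>
      intro j hj
      rw [length_wordOf_cons] at hj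
      set tm : List (β ⊕ₗ γ) := (t p).map fun a => toLex (Sum.inr a) with htm
      have hWc : wordOf t s (p :: ps) = tm ++ toLex (Sum.inl (s p)) :: wordOf t s ps :=
        wordOf_cons t s p ps
      have hlentm : tm.length = (t p).length := by simp [htm]
      rcases Nat.lt_or_ge j ((t p).length + 1) with hlt | hge
      · rcases Nat.eq_zero_or_pos j with rfl | hpos
        · -- j = 0 : key is the full text t p
          refine ⟨p, List.mem_cons_self, 0, Nat.zero_le _, ?_, ?_⟩
          · rw [hWc, List.drop_zero, keyFn_block, List.drop_zero]
          · simp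
        · -- 1 ≤ j ≤ (t p).length : key is a proper suffix
          refine ⟨p, List.mem_cons_self, j, by omega, ?_, ?_⟩
          · rw [hWc, List.drop_append_of_le_length (by omega), htm, ← List.map_drop,
              keyFn_block]
          · constructor
            · intro h; omega
            · rintro (h | ⟨b, hb⟩)
              · omega
              · rw [hWc, List.getElem?_append_left (by omega), htm,
                  List.getElem?_map, List.getElem?_eq_getElem (by omega)] at hb
                simp only [Option.map_some] at hb
                exact absurd (toLex.injective (Option.some.inj hb)) (by simp)
      · -- j ≥ (t p).length + 1 : recurse
        set i := j - ((t p).length + 1) with hi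
        have hjeq : j = (t p).length + 1 + i := by omega
        have hiw : i < (wordOf t s ps).length := by omega
        obtain ⟨q, hq, m, hm, hkey, hiff⟩ := ih (fun p hp => htp p (List.mem_cons_of_mem _ hp)) i hiw
        refine ⟨q, List.mem_cons_of_mem _ hq, m, hm, ?_, ?_⟩
        · have hdrop : (wordOf t s (p :: ps)).drop j = (wordOf t s ps).drop i := by
            rw [hWc,
              show tm ++ toLex (Sum.inl (s p)) :: wordOf t s ps
                = (tm ++ [toLex (Sum.inl (s p))]) ++ wordOf t s ps by simp,
              hjeq,
              show (t p).length + 1 + i = (tm ++ [toLex (Sum.inl (s p))]).length + i by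
                simp [hlentm],
              List.drop_length_add_append]
          rw [hdrop, hkey]
        · rw [hiff]
          have hne0 : j ≠ 0 := by omega
          rcases Nat.eq_zero_or_pos i with hzi | hposi
          · rw [iff_true_intro (Or.inl hzi), true_iff]
            refine Or.inr ⟨s p, ?_⟩
            rw [hWc, show j - 1 = tm.length by omega,
              List.getElem?_append_right (le_refl _)]
            simp
          · have harr : (wordOf t s (p :: ps))[j-1]? = (wordOf t s ps)[i-1]? := by
              rw [hWc, List.getElem?_append_right (show tm.length ≤ j - 1 by omega),
                show j - 1 - tm.length = i - 1 + 1 by omega]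
              simp
            constructor
            · rintro (h | ⟨b, hb⟩)
              · omega
              · exact Or.inr ⟨b, by rw [harr]; exact hb⟩
            · rintro (h | ⟨b, hb⟩)
              · exact absurd h hne0
              · exact Or.inr ⟨b, by rw [← harr]; exact hb⟩
  
end MdolAux
namespace MdolAux

theorem mem_of_getLast?_eq_some {δ : Type*} {l : List δ} {x : δ}
    (h : l.getLast? = some x) : x ∈ l := by
  have hne : l ≠ [] := by rintro rfl; simp at h
  rw [List.getLast?_eq_getLast hne] at h
  exact (Option.some.inj h) ▸ List.getLast_mem hne

theorem lastOut_eq_bot_iff {α : Type*} {k : ℕ} {R : List (Fin k ⊕ₗ α)} (hR : R ≠ []) :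
    lastOut R = ⊥ ↔ ∃ b, R.getLast? = some (toLex (Sum.inl b)) := by
  rcases h : R.getLast? with _ | c
  · exact absurd (List.getLast?_eq_none_iff.mp h) hR
  · obtain ⟨x, rfl⟩ : ∃ x, toLex x = c := ⟨ofLex c, rfl⟩
    rcases x with b | a
    · simp only [lastOut, h]
      exact iff_of_true rfl ⟨b, rfl⟩
    · simp only [lastOut, h]
      constructor
      · intro hcontra; exact absurd hcontra (by simp)
      · rintro ⟨b, hb⟩
        exact absurd (toLex.injective (Option.some.inj hb)) (by simp)

theorem getLast?_take {δ : Type*} {W : List δ} {j : ℕ} (h1 : 1 ≤ j) (h2 : j ≤ W.length) :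
    (W.take j).getLast? = W[j-1]? := by
  have hlt : j - 1 < W.length := by omega
  have h' : W.take j = W.take (j-1) ++ [W[j-1]] := by
    conv_lhs => rw [show j = (j-1)+1 by omega]
    rw [List.take_succ, List.getElem?_eq_getElem hlt]
    rfl
  rw [h', List.getLast?_append, List.getElem?_eq_getElem hlt]
  rfl

theorem rot_getLast? {δ : Type*} {W : List δ} {j : ℕ} (h1 : 1 ≤ j) (h2 : j ≤ W.length) :
    (rot W j).getLast? = W[j-1]? := by
  have htk : (W.take j).getLast? = W[j-1]? := getLast?_take h1 h2
  rw [rot, List.getLast?_append, htk, List.getElem?_eq_getElem (by omega)]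
  rfl

theorem lastOut_rot_iff {α : Type*} {k : ℕ} {W : List (Fin k ⊕ₗ α)}
    (hW : ∃ b, W.getLast? = some (toLex (Sum.inl b))) {j : ℕ} (hj : j < W.length) :
    lastOut (rot W j) = ⊥ ↔ (j = 0 ∨ ∃ b, W[j-1]? = some (toLex (Sum.inl b))) := by
  have hrotne : rot W j ≠ [] := by
    have hlen : (rot W j).length = W.length := by simp [rot]; omega
    intro h
    rw [h] at hlen
    simp at hlen
    omega
  rw [lastOut_eq_bot_iff hrotne]
  rcases Nat.eq_zero_or_pos j with rfl | hpos
  · rw [show rot W 0 = W by simp [rot]]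
    exact iff_of_true hW (Or.inl rfl)
  · rw [rot_getLast? hpos hj.le]
    constructor
    · exact fun h => Or.inr h
    · rintro (h | h)
      · omega
      · exact h

theorem keyFn_rot {α β : Type*} {W : List (β ⊕ₗ α)}
    (hW : ∃ b, W.getLast? = some (toLex (Sum.inl b))) {j : ℕ} (hj : j < W.length) :
    keyFn (rot W j) = keyFn (W.drop j) := by
  obtain ⟨b, hb⟩ := hW
  have hdne : W.drop j ≠ [] := by
    intro h
    have := congrArg List.length h
    simp at this; omega
  have hlast : (W.drop j).getLast? = some (toLex (Sum.inl b)) := by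
    conv at hb => rw [← List.take_append_drop j W]
    rw [List.getLast?_append] at hb
    rw [List.getLast?_eq_getLast hdne] at hb ⊢
    simpa using hb
  exact keyFn_append_left _ (mem_of_getLast?_eq_some hlast)

end MdolAux
namespace MdolAux

theorem sorted_keys {β γ : Type*} [LT β] [LT γ] {L : List (List (β ⊕ₗ γ))}
    (h : L.Pairwise listLe) : (L.map keyFn).Pairwise listLe :=
  List.Pairwise.map _ (fun a b hab => by
    rcases hab with rfl | hlex
    · exact Or.inl rfl
    · exact keyFn_mono hlex) h

theorem listLe_antisymm {γ : Type*} [LinearOrder γ] : IsAntisymm (List γ) listLe := by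
  constructor
  rintro a b (rfl | h1) (h2 | h2)
  · rfl
  · rfl
  · exact h2.symm
  · exact absurd h2 (Std.Asymm.asymm _ _ h1)

theorem mWord_eq_wordOf {α : Type*} [LinearOrder α] {k : ℕ} (T : Fin k → List α)
    (σ : Equiv.Perm (Fin k)) :
    mWord T σ = wordOf (fun p => T (σ p)) (fun p => p) (List.finRange k) := rfl

theorem finRange_ne_nil {k : ℕ} (hk : 0 < k) : List.finRange k ≠ [] := by
  intro h
  have := congrArg List.length h
  simp at this
  omega

theorem getLast?_mWord {α : Type*} [LinearOrder α] {k : ℕ} (hk : 0 < k)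
    (T : Fin k → List α) (σ : Equiv.Perm (Fin k)) :
    ∃ b, (mWord T σ).getLast? = some (toLex (Sum.inl b)) := by
  rw [mWord_eq_wordOf]
  exact getLast?_wordOf _ _ _ (finRange_ne_nil hk)

theorem perm_map_finRange {k : ℕ} (σ : Equiv.Perm (Fin k)) :
    ((List.finRange k).map σ).Perm (List.finRange k) := by
  apply List.perm_of_nodup_nodup_toFinset_eq
  · exact (List.nodup_finRange k).map σ.injective
  · exact List.nodup_finRange k
  · ext x; simpa using ⟨σ.symm x, by simp⟩

theorem mRots_keys {α : Type*} [LinearOrder α] {k : ℕ} (hk : 0 < k)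
    (T : Fin k → List α) (σ : Equiv.Perm (Fin k)) :
    ((mRots T σ).map keyFn).Perm
      ((List.finRange k).flatMap fun i =>
        (List.range (T i).length).map ((T i).drop) ++ [[]]) := by
  have hW := getLast?_mWord hk T σ
  have heq : (mRots T σ).map keyFn
      = (List.finRange k).flatMap fun p =>
          (List.range (T (σ p)).length).map ((T (σ p)).drop) ++ [[]] := by
    rw [mRots, List.map_map]
    have h1 : (List.range (mWord T σ).length).map (keyFn ∘ rot (mWord T σ))
        = (List.range (mWord T σ).length).map (fun j => keyFn ((mWord T σ).drop j)) := by
      apply List.map_congr_left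
      intro j hj
      rw [List.mem_range] at hj
      exact keyFn_rot hW hj
    rw [h1, mWord_eq_wordOf, keys_wordOf]
  rw [heq]
  have h2 : ((List.finRange k).map σ).flatMap
      (fun i => (List.range (T i).length).map ((T i).drop) ++ [[]])
      = (List.finRange k).flatMap fun p =>
          (List.range (T (σ p)).length).map ((T (σ p)).drop) ++ [[]] :=
    List.flatMap_map _ _ _
  rw [← h2]
  exact List.Perm.flatMap_right _ (perm_map_finRange σ)

theorem phi {α : Type*} [LinearOrder α] {k : ℕ} (hk : 0 < k) (T : Fin k → List α)
    (hT : ∀ i, T i ≠ [])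
    (hcon : ¬ ∃ i j : Fin k, i ≠ j ∧ T i <:+ T j ∧ T i ≠ T j)
    (σ : Equiv.Perm (Fin k)) {R : List (Fin k ⊕ₗ α)} (hR : R ∈ mRots T σ) :
    (lastOut R = ⊥ ↔ ∃ i, T i = keyFn R) := by
  obtain ⟨j, hj, rfl⟩ : ∃ j, j < (mWord T σ).length ∧ rot (mWord T σ) j = R := by
    rw [mRots] at hR
    obtain ⟨j, hj, hr⟩ := List.mem_map.mp hR
    exact ⟨j, List.mem_range.mp hj, hr⟩
  have hW := getLast?_mWord hk T σ
  obtain ⟨p, _, m, hm, hkey, hiff⟩ :=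
    claimB (fun p => T (σ p)) (fun p => p) (List.finRange k)
      (fun p _ => hT (σ p)) j (by rw [← mWord_eq_wordOf]; exact hj)
  rw [← mWord_eq_wordOf] at hkey hiff
  have hbot : lastOut (rot (mWord T σ) j) = ⊥ ↔ m = 0 := by
    rw [lastOut_rot_iff hW hj, hiff]
  have hkeyR : keyFn (rot (mWord T σ) j) = (T (σ p)).drop m := by
    rw [keyFn_rot hW hj, hkey]
  rw [hbot, hkeyR]
  rcases Nat.eq_zero_or_pos m with rfl | hpos
  · simp only [List.drop_zero]
    exact ⟨fun _ => ⟨σ p, rfl⟩, fun _ => trivial⟩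
  · constructor
    · intro h; omega
    · rintro ⟨i, hi⟩
      exfalso
      apply hcon
      have hlenTi : (T i).length = (T (σ p)).length - m := by rw [hi]; simp
      have hlenpos : 0 < (T i).length := List.length_pos_iff.mpr (hT i)
      have hTne : T i ≠ T (σ p) := by
        intro h
        rw [h] at hlenTi
        omega
      refine ⟨i, σ p, ?_, ?_, hTne⟩
      · intro h; exact hTne (by rw [h])
      · rw [hi]; exact List.drop_suffix m _

end MdolAux

/-- Let `I_1` and `I_2` be the sets of positions at which the sentinel `$`
occurs in `mdolBWT(M,σ)` and in `mdolBWT(M,τ)` respectively.  If `I_1 ≠ I_2`, then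
there exist indices `i ≠ j` such that `T_i` is a proper suffix of `T_j`. -/
theorem mdolBWT_dollar_positions {α : Type*} [LinearOrder α]
    (k : ℕ) (hk : 2 ≤ k) (T : Fin k → List α) (hT : ∀ i, T i ≠ [])
    (σ τ : Equiv.Perm (Fin k))
    (L1 L2 : List (List (Fin k ⊕ₗ α)))
    (hperm1 : L1.Perm (mRots T σ)) (hsort1 : L1.Pairwise listLe)
    (hperm2 : L2.Perm (mRots T τ)) (hsort2 : L2.Pairwise listLe)
    (hne : {p : ℕ | (mdolOf L1)[p]? = some ⊥} ≠ {p : ℕ | (mdolOf L2)[p]? = some ⊥}) :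
    ∃ i j : Fin k, i ≠ j ∧ T i <:+ T j ∧ T i ≠ T j := by
  classical
  by_contra hcon
  apply hne
  have hk0 : 0 < k := by omega
  have hK1 := (hperm1.map MdolAux.keyFn).trans (MdolAux.mRots_keys hk0 T σ)
  have hK2 := (hperm2.map MdolAux.keyFn).trans (MdolAux.mRots_keys hk0 T τ)
  have hKeq : L1.map MdolAux.keyFn = L2.map MdolAux.keyFn := by
    have := MdolAux.listLe_antisymm (γ := α)
    exact List.Perm.eq_of_pairwise' (MdolAux.sorted_keys hsort1) (MdolAux.sorted_keys hsort2)
      (hK1.trans hK2.symm)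
  have hlen : L1.length = L2.length := by
    have := congrArg List.length hKeq
    simpa using this
  ext p
  simp only [Set.mem_setOf_eq, mdolOf]
  rcases Nat.lt_or_ge p L1.length with hp | hp
  · have hp2 : p < L2.length := hlen ▸ hp
    rw [List.getElem?_map, List.getElem?_map, List.getElem?_eq_getElem hp,
      List.getElem?_eq_getElem hp2]
    simp only [Option.map_some, Option.some_inj]
    have h1 := MdolAux.phi hk0 T hT hcon σ (hperm1.subset (List.getElem_mem hp))
    have h2 := MdolAux.phi hk0 T hT hcon τ (hperm2.subset (List.getElem_mem hp2))
    rw [h1, h2]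
    have hkp : MdolAux.keyFn (L1[p]) = MdolAux.keyFn (L2[p]) := by
      have := congrArg (fun l => l[p]?) hKeq
      simp only [List.getElem?_map, List.getElem?_eq_getElem hp,
        List.getElem?_eq_getElem hp2, Option.map_some] at this
      exact Option.some.inj this
    rw [hkp]
  · have hp2 : L2.length ≤ p := hlen ▸ hp
    rw [List.getElem?_map, List.getElem?_map, List.getElem?_eq_none (by simpa using hp),
      List.getElem?_eq_none (by simpa using hp2)]
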